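/- In the construction, for every x = (u₀, u₁, u₂, …) ∈ X with x ≠ p, there exists N > 0 such that deg(u_N) = deg(u_{N+1}) = ⋯ = deg(x); that is, deg(uₙ) = deg(x) for all n ≥ N. -/

import Mathlib

open Filter Topology
open scoped ENNReal

/-- `φ` is a graph homomorphism from `(V₁,E₁)` to `(V₂,E₂)`. -/
def IsGraphHom {V₁ V₂ : Type*} (E₁ : V₁ → V₁ → Prop) (E₂ : V₂ → V₂ → Prop)
    (φ : V₁ → V₂) : Prop :=
  ∀ u v, E₁ u v → E₂ (φ u) (φ v)

/-- `φ` is edge surjective. -/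
def IsEdgeSurj {V₁ V₂ : Type*} (E₁ : V₁ → V₁ → Prop) (E₂ : V₂ → V₂ → Prop)
    (φ : V₁ → V₂) : Prop :=
  ∀ u v, E₂ u v → ∃ u' v', E₁ u' v' ∧ φ u' = u ∧ φ v' = v

/-- `φ` is +directional. -/
def IsPlusDirectional {V₁ V₂ : Type*} (E₁ : V₁ → V₁ → Prop) (φ : V₁ → V₂) : Prop :=
  ∀ u v v', E₁ u v → E₁ u v' → φ v = φ v'

/-- `φ` is bidirectional. -/
def IsBidirectional {V₁ V₂ : Type*} (E₁ : V₁ → V₁ → Prop) (φ : V₁ → V₂) : Prop :=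
  IsPlusDirectional E₁ φ ∧ ∀ u u' v, E₁ u v → E₁ u' v → φ u = φ u'

/-- `φ` is a cover: a +directional edge-surjective graph homomorphism. -/
def IsCover {V₁ V₂ : Type*} (E₁ : V₁ → V₁ → Prop) (E₂ : V₂ → V₂ → Prop)
    (φ : V₁ → V₂) : Prop :=
  IsGraphHom E₁ E₂ φ ∧ IsPlusDirectional E₁ φ ∧ IsEdgeSurj E₁ E₂ φ

/-- every vertex has an incoming and an outgoing edge. -/
def IsSurjDigraph {V : Type*} (E : V → V → Prop) : Prop :=
  (∀ v, ∃ u, E u v) ∧ ∀ u, ∃ v, E u v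

/-- the inverse limit `V_𝒢` of a sequence of graph maps. -/
abbrev InvLim (V : ℕ → Type*) (φ : ∀ n, V (n + 1) → V n) : Type _ :=
  { x : ∀ n, V n // ∀ n, φ n (x (n + 1)) = x n }

/-- the relation `E_𝒢` on `V_𝒢`. -/
def ERel {V : ℕ → Type*} (E : ∀ n, V n → V n → Prop) (φ : ∀ n, V (n + 1) → V n)
    (x y : InvLim V φ) : Prop :=
  ∀ n, E n (x.1 n) (y.1 n)

/-- the product-of-discrete topology on the inverse limit, given explicitly. -/
def invLimTop (V : ℕ → Type*) (φ : ∀ n, V (n + 1) → V n) :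
    TopologicalSpace (InvLim V φ) :=
  @instTopologicalSpaceSubtype _ _ (@Pi.topologicalSpace ℕ V fun _ => ⊥)

/-- the distance function of an explicitly given metric space structure. -/
noncomputable def mdist {X : Type*} (m : MetricSpace X) (x y : X) : ℝ :=
  @dist X m.toDist x y

/-- the topology induced by an explicitly given metric space structure. -/
def mtop {X : Type*} (m : MetricSpace X) : TopologicalSpace X :=
  @UniformSpace.toTopologicalSpace X m.toUniformSpace

/-- the (half-open) list of vertices `vtx i 0, vtx i 1, …, vtx i (len-1)` of
the circuit `c_{n,i}`, the final vertex (equal to the initial one) omitted. -/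
def circList {Vn : Type*} (vtx : ℕ → ℕ → Vn) (i len : ℕ) : List Vn :=
  List.ofFn fun j : Fin len => vtx i (j : ℕ)

theorem stmt11
    (V : ℕ → Type) [∀ n, TopologicalSpace (V n)] [∀ n, DiscreteTopology (V n)]
    [∀ n, Fintype (V n)]
    (E : ∀ n, V n → V n → Prop) (φ : ∀ n, V (n + 1) → V n)
    (len : ℕ → ℕ → ℕ) (v0 : ∀ n, V n) (vtx : ∀ n, ℕ → ℕ → V n)
    (hV0 : ∀ u : V 0, u = v0 0)
    (hE0 : ∀ u v : V 0, E 0 u v ↔ u = v0 0 ∧ v = v0 0)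
    (hends : ∀ n i, 1 ≤ i → i ≤ n → vtx n i 0 = v0 n ∧ vtx n i (len n i) = v0 n)
    (hlen2 : ∀ n i, 1 ≤ i → i ≤ n → 2 ≤ len n i)
    (hrec : ∀ n i, 1 ≤ i → i ≤ n →
      len (n + 1) i = 2 + 2 * ∑ j ∈ Finset.Icc i n, len n j)
    (hne : ∀ n i j, 1 ≤ i → i ≤ n → 0 < j → j < len n i → vtx n i j ≠ v0 n)
    (hinj : ∀ n i j i' j', 1 ≤ i → i ≤ n → 1 ≤ i' → i' ≤ n →
      0 < j → j < len n i → 0 < j' → j' < len n i' →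
      vtx n i j = vtx n i' j' → i = i' ∧ j = j')
    (hall : ∀ n, 1 ≤ n → ∀ u : V n,
      u = v0 n ∨ ∃ i j, 1 ≤ i ∧ i ≤ n ∧ 0 < j ∧ j < len n i ∧ u = vtx n i j)
    (hE : ∀ n, 1 ≤ n → ∀ u v : V n, E n u v ↔
      (u = v0 n ∧ v = v0 n) ∨
      ∃ i j, 1 ≤ i ∧ i ≤ n ∧ j < len n i ∧ u = vtx n i j ∧ v = vtx n i (j + 1))
    (hphi0 : ∀ n, φ n (v0 (n + 1)) = v0 n)
    (hphitop : ∀ n j, j ≤ len (n + 1) (n + 1) → φ n (vtx (n + 1) (n + 1) j) = v0 n)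
    (hphiwalk : ∀ n i, 1 ≤ i → i ≤ n →
      List.map (φ n) (circList (vtx (n + 1)) i (len (n + 1) i)) =
        v0 n :: (((List.range' i (n + 1 - i)).flatMap fun k =>
          circList (vtx n) k (len n k) ++ circList (vtx n) k (len n k)) ++ [v0 n]))
    (hcov : ∀ n, IsCover (E (n + 1)) (E n) (φ n))
    (p : InvLim V φ) (hp : ∀ n, p.1 n = v0 n)
    (degv : ∀ n, V n → ℕ∞)
    (hdegv0 : ∀ n, degv n (v0 n) = ⊤)
    (hdegvi : ∀ n i j, 1 ≤ i → i ≤ n → 0 < j → j < len n i →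
      degv n (vtx n i j) = (i : ℕ∞)) :
    ∀ x : InvLim V φ, x ≠ p →
      ∃ N : ℕ, 0 < N ∧ ∀ n, N ≤ n → degv n (x.1 n) = ⨅ k, degv k (x.1 k) := by
  intro x _hx
  set f : ℕ → ℕ∞ := fun n => degv n (x.1 n) with hf
  have hstep : ∀ n, f (n + 1) ≤ f n := by
    intro n
    have hxeq : φ n (x.1 (n + 1)) = x.1 n := x.2 n
    rcases hall (n + 1) (by omega) (x.1 (n + 1)) with h | ⟨i, j, hi1, hin, hj0, hjl, hu⟩
    · have hx0 : x.1 n = v0 n := by rw [← hxeq, h, hphi0]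
      simp [hf, h, hx0, hdegv0]
    · have hdeg1 : f (n + 1) = (i : ℕ∞) := by
        simp [hf, hu, hdegvi (n + 1) i j hi1 hin hj0 hjl]
      rcases eq_or_lt_of_le hin with hitop | hile
      · -- i = n + 1
        subst hitop
        have hx0 : x.1 n = v0 n := by
          rw [← hxeq, hu]; exact hphitop n j hjl.le
        simp [hf, hx0, hdegv0]
      · have hile : i ≤ n := by omega
        have hmem : x.1 n ∈ List.map (φ n) (circList (vtx (n + 1)) i (len (n + 1) i)) := by
          rw [← hxeq, hu]
          refine List.mem_map_of_mem ?_
          simp only [circList, List.mem_ofFn]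
          exact ⟨⟨j, hjl⟩, rfl⟩
        rw [hphiwalk n i hi1 hile] at hmem
        rw [hdeg1]
        simp only [List.mem_cons, List.mem_append, List.mem_flatMap,
          List.mem_range'_1, circList, List.mem_ofFn, List.mem_singleton] at hmem
        rcases hmem with h0 | h
        · simp [hf, h0, hdegv0]
        rcases h with ⟨k, ⟨hk1, hk2⟩, hmemk⟩ | h0
        · have hk2' : k ≤ n := by omega
          have hki : 1 ≤ k := le_trans hi1 hk1
          have hex : ∃ j' : Fin (len n k), vtx n k (j' : ℕ) = x.1 n := by
            rcases hmemk with h | h <;> exact h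
          obtain ⟨⟨j', hj'⟩, hjeq⟩ := hex
          rcases Nat.eq_zero_or_pos j' with hz | hz
          · have hx0 : x.1 n = v0 n := by
              rw [← hjeq]
              simp only [hz]
              exact (hends n k hki hk2').1
            simp [hf, hx0, hdegv0]
          · have hfk : f n = (k : ℕ∞) := by
              simp [hf, ← hjeq, hdegvi n k j' hki hk2' hz hj']
            rw [hfk]
            exact_mod_cast hk1
        · rcases h0 with h0 | h0
          · simp [hf, h0, hdegv0]
          · simp at h0
  have hant : Antitone f := antitone_nat_of_succ_le hstep
  obtain ⟨m, ⟨N, hN⟩, hmin⟩ :=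
    (wellFounded_lt : WellFounded ((· < ·) : ℕ∞ → ℕ∞ → Prop)).has_min
      (Set.range f) ⟨f 0, 0, rfl⟩
  have hlb : ∀ k, m ≤ f k := fun k => not_lt.mp (hmin _ ⟨k, rfl⟩)
  have hinf : (⨅ k, f k) = m :=
    le_antisymm (hN ▸ iInf_le f N) (le_iInf hlb)
  refine ⟨N + 1, Nat.succ_pos N, fun n hn => ?_⟩
  have h1 : f n ≤ m := hN ▸ hant (by omega : N ≤ n)
  have heq : f n = m := le_antisymm h1 (hlb n)
  show f n = ⨅ k, f k
  rw [heq, hinf]
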